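/- arXiv:1507.01762 — 3 statements merged into one kernel-verified Lean document; each statement's English description precedes it below -/
import Mathlib

section
/- Suppose complex numbers d_1,…,d_n satisfy arg(d_k) ∈ [0, π/2 + θ] for all k (with θ ∈ [0, π/2)), and a subset S ⊆ {1,…,n} satisfies |∑_{k∈S} d_k| ≤ C with ∑_{k∈S} Im(d_k) ≥ 0. Then ∑_{k∈S} Im(d_k) ≤ C, ∑_{k∈S, Re(d_k)<0} (−Re(d_k)) ≤ C·tan θ, and ∑_{k∈S, Re(d_k)≥0} Re(d_k) ≤ C(1 + tan θ). -/
theorem projection_bounds (n : ℕ) (d : Fin n → ℂ) (θ C : ℝ)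
    (hθ : θ ∈ Set.Ico 0 (Real.pi / 2)) (hC : 0 < C)
    (harg : ∀ k, Complex.arg (d k) ∈ Set.Icc 0 (Real.pi / 2 + θ))
    (S : Finset (Fin n))
    (hcap : ‖∑ k ∈ S, d k‖ ≤ C)
    (hIm : 0 ≤ ∑ k ∈ S, (d k).im) :
    (∑ k ∈ S, (d k).im ≤ C) ∧
    (∑ k ∈ S.filter (fun k => (d k).re < 0), (-(d k).re) ≤ C * Real.tan θ) ∧
    (∑ k ∈ S.filter (fun k => 0 ≤ (d k).re), (d k).re ≤ C * (1 + Real.tan θ)) := by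
  obtain ⟨hθ0, hθlt⟩ := hθ
  have hcos : 0 < Real.cos θ :=
    Real.cos_pos_of_mem_Ioo ⟨by linarith [Real.pi_pos], hθlt⟩
  have htan : 0 ≤ Real.tan θ := by
    rw [Real.tan_eq_sin_div_cos]
    exact div_nonneg (Real.sin_nonneg_of_nonneg_of_le_pi hθ0 (by linarith [Real.pi_pos])) hcos.le
  have him : ∀ k, 0 ≤ (d k).im := fun k => Complex.arg_nonneg_iff.mp (harg k).1
  -- sum of imaginary parts bounded by C
  have hImsum : (∑ k ∈ S, d k).im = ∑ k ∈ S, (d k).im := Complex.im_sum S _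
  have h1 : ∑ k ∈ S, (d k).im ≤ C := by
    calc ∑ k ∈ S, (d k).im = (∑ k ∈ S, d k).im := hImsum.symm
      _ ≤ ‖∑ k ∈ S, d k‖ := Complex.im_le_norm _
      _ ≤ C := hcap
  -- key pointwise bound
  have hkey : ∀ k, (d k).re < 0 → -(d k).re ≤ (d k).im * Real.tan θ := by
    intro k hk
    set a := Complex.arg (d k) with ha
    have ha0 : 0 ≤ a := (harg k).1
    have ha1 : a ≤ Real.pi / 2 + θ := (harg k).2
    have hcosab : 0 ≤ Real.cos (a - θ) :=
      Real.cos_nonneg_of_mem_Icc ⟨by linarith, by linarith⟩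
    rw [Real.cos_sub] at hcosab
    have hre : ‖d k‖ * Real.cos a = (d k).re := Complex.norm_mul_cos_arg _
    have himk : ‖d k‖ * Real.sin a = (d k).im := Complex.norm_mul_sin_arg _
    have habs : (0:ℝ) ≤ ‖d k‖ := norm_nonneg _
    have hmul : 0 ≤ ‖d k‖ * (Real.cos a * Real.cos θ + Real.sin a * Real.sin θ) :=
      mul_nonneg habs hcosab
    have h2 := hmul
    rw [mul_add, ← mul_assoc, ← mul_assoc, hre, himk] at h2
    rw [Real.tan_eq_sin_div_cos, ← mul_div_assoc, le_div_iff₀ hcos]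
    nlinarith [him k]
  refine ⟨h1, ?_, ?_⟩
  · calc ∑ k ∈ S.filter (fun k => (d k).re < 0), (-(d k).re)
        ≤ ∑ k ∈ S.filter (fun k => (d k).re < 0), (d k).im * Real.tan θ := by
          apply Finset.sum_le_sum
          intro k hk
          exact hkey k (Finset.mem_filter.mp hk).2
      _ = (∑ k ∈ S.filter (fun k => (d k).re < 0), (d k).im) * Real.tan θ := by
          rw [Finset.sum_mul]
      _ ≤ (∑ k ∈ S, (d k).im) * Real.tan θ := by
          apply mul_le_mul_of_nonneg_right _ htan
          exact Finset.sum_le_sum_of_subset_of_nonneg (Finset.filter_subset _ _)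
            (fun k _ _ => him k)
      _ ≤ C * Real.tan θ := mul_le_mul_of_nonneg_right h1 htan
  · have hneg : ∑ k ∈ S.filter (fun k => (d k).re < 0), (-(d k).re) ≤ C * Real.tan θ := by
      calc ∑ k ∈ S.filter (fun k => (d k).re < 0), (-(d k).re)
          ≤ ∑ k ∈ S.filter (fun k => (d k).re < 0), (d k).im * Real.tan θ := by
            apply Finset.sum_le_sum
            intro k hk
            exact hkey k (Finset.mem_filter.mp hk).2
        _ = (∑ k ∈ S.filter (fun k => (d k).re < 0), (d k).im) * Real.tan θ := by
            rw [Finset.sum_mul]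
        _ ≤ (∑ k ∈ S, (d k).im) * Real.tan θ := by
            apply mul_le_mul_of_nonneg_right _ htan
            exact Finset.sum_le_sum_of_subset_of_nonneg (Finset.filter_subset _ _)
              (fun k _ _ => him k)
        _ ≤ C * Real.tan θ := mul_le_mul_of_nonneg_right h1 htan
    have hsplit : (∑ k ∈ S.filter (fun k => 0 ≤ (d k).re), (d k).re)
        + ∑ k ∈ S.filter (fun k => (d k).re < 0), (d k).re = ∑ k ∈ S, (d k).re := by
      have heq : S.filter (fun k => (d k).re < 0) = S.filter (fun k => ¬ 0 ≤ (d k).re) := by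
        simp [not_le]
      rw [heq]
      exact Finset.sum_filter_add_sum_filter_not S _ _
    have hResum : ∑ k ∈ S, (d k).re = (∑ k ∈ S, d k).re := (Complex.re_sum S _).symm
    have hRe : ∑ k ∈ S, (d k).re ≤ C := by
      rw [hResum]
      exact le_trans (Complex.re_le_norm _) hcap
    have : ∑ k ∈ S.filter (fun k => (d k).re < 0), (d k).re
        = -∑ k ∈ S.filter (fun k => (d k).re < 0), (-(d k).re) := by
      rw [Finset.sum_neg_distrib]; ring
    nlinarith [hneg, hsplit, hRe]
end

section
/- Let S ⊆ {1,…,n}, and let D_+, D_−, D_I and Ĥ_+, Ĥ_−, Ĥ_I be nonnegative reals satisfying D_+ ≤ Ĥ_+ ≤ D_+ + nL, D_− ≤ Ĥ_− ≤ D_− + nL, D_I ≤ Ĥ_I ≤ D_I + nL for some L > 0. If (D_+ − D_−)² + D_I² ≤ C² and D_+ + D_− ≤ (2P+1)C and D_I ≤ C for some P ≥ 1 and C > 0, and L = εC/(n(P+1)) for some ε ∈ (0,1], then (Ĥ_+ − Ĥ_−)² + Ĥ_I² ≤ C²(1+2ε)². -/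
set_option maxHeartbeats 800000 in
theorem rounded_projection_feasible (n : ℕ) (hn : 1 ≤ n)
    (Dp Dm DI Hp Hm HI L C P ε : ℝ)
    (hDp : 0 ≤ Dp) (hDm : 0 ≤ Dm) (hDI : 0 ≤ DI)
    (hHp : 0 ≤ Hp) (hHm : 0 ≤ Hm) (hHI : 0 ≤ HI)
    (hL : 0 < L)
    (h1 : Dp ≤ Hp ∧ Hp ≤ Dp + n * L)
    (h2 : Dm ≤ Hm ∧ Hm ≤ Dm + n * L)
    (h3 : DI ≤ HI ∧ HI ≤ DI + n * L)
    (hP : 1 ≤ P) (hC : 0 < C)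
    (hfeas : (Dp - Dm) ^ 2 + DI ^ 2 ≤ C ^ 2)
    (hproj : Dp + Dm ≤ (2 * P + 1) * C) (hprojI : DI ≤ C)
    (hε : ε ∈ Set.Ioc (0 : ℝ) 1)
    (hLdef : L = ε * C / (n * (P + 1))) :
    (Hp - Hm) ^ 2 + HI ^ 2 ≤ C ^ 2 * (1 + 2 * ε) ^ 2 := by
  obtain ⟨hε0, hε1⟩ := hε
  set t := (n : ℝ) * L with ht
  have hn' : (1 : ℝ) ≤ n := by exact_mod_cast hn
  have hn0 : (n : ℝ) ≠ 0 := by positivity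
  have hP1 : (0 : ℝ) < P + 1 := by linarith
  have htP : t * (P + 1) = ε * C := by
    rw [ht, hLdef]; field_simp
  have ht0 : 0 < t := by positivity
  have htle : t ≤ ε * C / 2 := by
    rw [le_div_iff₀ (by norm_num : (0:ℝ) < 2)]
    nlinarith
  have hDsq : (Dp - Dm) ^ 2 ≤ C ^ 2 := by nlinarith [sq_nonneg DI]
  have hDabs : |Dp - Dm| ≤ C := by
    rw [abs_le]; constructor <;> nlinarith [abs_nonneg (Dp - Dm), sq_abs (Dp - Dm)]
  have hub : Hp - Hm ≤ Dp - Dm + t := by linarith [h1.2, h2.1]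
  have hlb : Dp - Dm - t ≤ Hp - Hm := by linarith [h1.1, h2.2]
  have hHIub : HI ≤ DI + t := h3.2
  have habs : |Hp - Hm| ≤ |Dp - Dm| + t :=
    abs_le.mpr ⟨by linarith [neg_abs_le (Dp - Dm)], by linarith [le_abs_self (Dp - Dm)]⟩
  have h4 : (Hp - Hm) ^ 2 ≤ (|Dp - Dm| + t) ^ 2 := by
    rw [← sq_abs (Hp - Hm)]
    exact pow_le_pow_left₀ (abs_nonneg _) habs 2
  have h5 : HI ^ 2 ≤ (DI + t) ^ 2 := by nlinarith
  have hm1 : t * |Dp - Dm| ≤ ε * C / 2 * C := mul_le_mul htle hDabs (abs_nonneg _) (by positivity)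
  have hm2 : t * DI ≤ ε * C / 2 * C := mul_le_mul htle hprojI hDI (by positivity)
  have hm3 : t * t ≤ ε * C / 2 * (ε * C / 2) := mul_le_mul htle htle ht0.le (by positivity)
  have hp1 : 0 ≤ ε * C ^ 2 := by positivity
  have hp2 : 0 ≤ ε ^ 2 * C ^ 2 := by positivity
  have hm1' : t * |Dp - Dm| ≤ ε * C ^ 2 / 2 := le_of_le_of_eq hm1 (by ring)
  have hm2' : t * DI ≤ ε * C ^ 2 / 2 := le_of_le_of_eq hm2 (by ring)
  have hm3' : t * t ≤ ε ^ 2 * C ^ 2 / 4 := le_of_le_of_eq hm3 (by ring)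
  have e1 : (|Dp - Dm| + t) ^ 2 = |Dp - Dm| ^ 2 + 2 * (t * |Dp - Dm|) + t * t := by ring
  have e2 : (DI + t) ^ 2 = DI ^ 2 + 2 * (t * DI) + t * t := by ring
  have e3 : |Dp - Dm| ^ 2 = (Dp - Dm) ^ 2 := sq_abs _
  have e4 : C ^ 2 * (1 + 2 * ε) ^ 2 = C ^ 2 + 4 * (ε * C ^ 2) + 4 * (ε ^ 2 * C ^ 2) := by ring
  linarith [h4, h5, hm1', hm2', hm3', hfeas, hp1, hp2, e1, e2, e3, e4]
end

section
/- Let d_1,…,d_n ∈ ℂ with |∑_{k∈S} d_k| ≤ C for some S ⊆ {1,…,n}, Im(d_k) ≥ 0 for all k, and arg(d_k) ≤ π/2 + θ for all k where θ ∈ [0, π/2). Then for the rounded demands ĥd_k (rounding real parts away from 0 and imaginary parts up by multiples of L = εC/(n(tanθ+1)), ε ∈ (0,1]), we have |∑_{k∈S} ĥd_k| ≤ (1+2ε)C. -/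
lemma ceil_err {L x : ℝ} (hL : 0 < L) : |L * ⌈x / L⌉ - x| ≤ L := by
  have h1 : (x / L : ℝ) ≤ ⌈x / L⌉ := Int.le_ceil _
  have h2 : (⌈x / L⌉ : ℝ) < x / L + 1 := Int.ceil_lt_add_one _
  have h1' := mul_le_mul_of_nonneg_left h1 hL.le
  have h2' := mul_lt_mul_of_pos_left h2 hL
  have hx : L * (x / L) = x := by field_simp
  rw [abs_le]; constructor <;> nlinarith

lemma floor_err {L x : ℝ} (hL : 0 < L) : |L * ⌊x / L⌋ - x| ≤ L := by
  have h1 : (⌊x / L⌋ : ℝ) ≤ x / L := Int.floor_le _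
  have h2 : x / L - 1 < ⌊x / L⌋ := Int.sub_one_lt_floor _
  have h1' := mul_le_mul_of_nonneg_left h1 hL.le
  have h2' := mul_lt_mul_of_pos_left h2 hL
  have hx : L * (x / L) = x := by field_simp
  rw [abs_le]; constructor <;> nlinarith

theorem rounded_sum_capacity (n : ℕ) (hn : 1 ≤ n) (d : Fin n → ℂ)
    (θ C ε : ℝ) (hθ : θ ∈ Set.Ico 0 (Real.pi / 2)) (hC : 0 < C)
    (hε : ε ∈ Set.Ioc (0 : ℝ) 1)
    (hIm : ∀ k, 0 ≤ (d k).im)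
    (harg : ∀ k, Complex.arg (d k) ≤ Real.pi / 2 + θ)
    (S : Finset (Fin n))
    (hcap : ‖∑ k ∈ S, d k‖ ≤ C) :
    let L : ℝ := ε * C / (n * (Real.tan θ + 1))
    let hd : Fin n → ℂ := fun k =>
      ((if 0 ≤ (d k).re then L * ⌈(d k).re / L⌉ else L * ⌊(d k).re / L⌋ : ℝ) : ℂ)
        + Complex.I * ((L * ⌈(d k).im / L⌉ : ℝ) : ℂ)
    ‖∑ k ∈ S, hd k‖ ≤ (1 + 2 * ε) * C := by
  intro L hd
  have htan : 0 ≤ Real.tan θ := Real.tan_nonneg_of_nonneg_of_le_pi_div_two hθ.1 hθ.2.le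
  have hnpos : (0 : ℝ) < n := by exact_mod_cast hn
  have hden : (0 : ℝ) < n * (Real.tan θ + 1) := by positivity
  have hL : 0 < L := by
    have : 0 < ε * C := mul_pos hε.1 hC
    exact div_pos this hden
  -- per-term error bound
  have herr : ∀ k, ‖hd k - d k‖ ≤ 2 * L := by
    intro k
    have hre : |(hd k - d k).re| ≤ L := by
      simp only [hd, Complex.sub_re, Complex.add_re, Complex.ofReal_re,
        Complex.mul_re, Complex.I_re, Complex.I_im, Complex.ofReal_im]
      split_ifs
      · simpa using ceil_err (x := (d k).re) hL
      · simpa using floor_err (x := (d k).re) hL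
    have him : |(hd k - d k).im| ≤ L := by
      simp only [hd, Complex.sub_im, Complex.add_im, Complex.ofReal_im,
        Complex.mul_im, Complex.I_re, Complex.I_im, Complex.ofReal_re]
      simpa using ceil_err (x := (d k).im) hL
    calc ‖hd k - d k‖ ≤ |(hd k - d k).re| + |(hd k - d k).im| :=
          Complex.norm_le_abs_re_add_abs_im _
      _ ≤ L + L := add_le_add hre him
      _ = 2 * L := by ring
  have hsum : ‖∑ k ∈ S, (hd k - d k)‖ ≤ n * (2 * L) := by
    calc ‖∑ k ∈ S, (hd k - d k)‖ ≤ ∑ k ∈ S, ‖hd k - d k‖ :=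
          norm_sum_le _ _
      _ ≤ ∑ _k ∈ S, 2 * L := Finset.sum_le_sum fun k _ => herr k
      _ = S.card * (2 * L) := by rw [Finset.sum_const, nsmul_eq_mul]
      _ ≤ n * (2 * L) := by
          have : (S.card : ℝ) ≤ n := by
            exact_mod_cast (Finset.card_le_card (Finset.subset_univ S)).trans
              (le_of_eq (Finset.card_fin n))
          nlinarith [hL]
  have hnL : n * (2 * L) ≤ 2 * ε * C := by
    have : n * (2 * L) = 2 * (ε * C) / (Real.tan θ + 1) := by
      simp only [L]; field_simp
    rw [this]
    rw [div_le_iff₀ (by linarith)]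
    nlinarith [mul_pos hε.1 hC]
  have key : ∑ k ∈ S, hd k = ∑ k ∈ S, d k + ∑ k ∈ S, (hd k - d k) := by
    rw [Finset.sum_sub_distrib]; abel
  calc ‖∑ k ∈ S, hd k‖
      = ‖∑ k ∈ S, d k + ∑ k ∈ S, (hd k - d k)‖ := by rw [key]
    _ ≤ ‖∑ k ∈ S, d k‖ + ‖∑ k ∈ S, (hd k - d k)‖ :=
        norm_add_le _ _
    _ ≤ C + 2 * ε * C := add_le_add hcap (hsum.trans hnL)
    _ = (1 + 2 * ε) * C := by ring
end
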